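/- Let X and Y be real random variables on a common probability space with 0 ≤ X ≤ a and 0 ≤ Y ≤ b almost surely, for constants a, b > 0. Then |E(XY) − E(X)E(Y)| ≤ a·b·μ(X, Y), where μ(X,Y) = sup over measurable sets A, B ⊆ ℝ of |P(X ∈ A, Y ∈ B) − P(X ∈ A)P(Y ∈ B)|. -/

import Mathlib

open MeasureTheory Real Set

private lemma prob_toReal_le_one {Ω : Type*} [MeasurableSpace Ω] (P : Measure Ω)
    [IsProbabilityMeasure P] (s : Set Ω) : (P s).toReal ≤ 1 := by
  have h := ENNReal.toReal_mono (measure_ne_top P univ) (measure_mono (subset_univ s))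
  simpa using h

private lemma slice_integral (c c' : ℝ) (h0 : 0 ≤ c') (hc : c' ≤ c) :
    ∫ s, (if s < c' then (1:ℝ) else 0) ∂(volume.restrict (Ioc 0 c)) = c' := by
  have h1 : (fun s => if s < c' then (1:ℝ) else 0) = (Iio c').indicator (1 : ℝ → ℝ) := by
    funext s; simp [Set.indicator_apply]
  rw [h1, integral_indicator_one measurableSet_Iio, measureReal_def,
    Measure.restrict_apply measurableSet_Iio]
  have h2 : Iio c' ∩ Ioc 0 c = Ioo 0 c' := by
    ext s
    constructor
    · rintro ⟨h1', h2', _⟩; exact ⟨h2', h1'⟩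
    · rintro ⟨h1', h2'⟩; exact ⟨h2', h1', h2'.le.trans hc⟩
  rw [h2, Real.volume_Ioo, ENNReal.toReal_ofReal (by linarith)]
  ring

private lemma layer_cake {Ω : Type*} [MeasurableSpace Ω] (P : Measure Ω)
    [IsProbabilityMeasure P] (Z : Ω → ℝ) (hZ : Measurable Z) (c : ℝ)
    (hc : ∀ᵐ ω ∂P, Z ω ∈ Icc 0 c) :
    ∫ ω, Z ω ∂P = ∫ s, (P {ω | s < Z ω}).toReal ∂(volume.restrict (Ioc 0 c)) := by
  haveI : Fact ((volume : Measure ℝ) (Ioc 0 c) < ⊤) := ⟨measure_Ioc_lt_top⟩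
  set ν := (volume : Measure ℝ).restrict (Ioc 0 c) with hν
  set g : Ω × ℝ → ℝ := fun q => if q.2 < Z q.1 then 1 else 0 with hg
  have hSmeas : MeasurableSet {q : Ω × ℝ | q.2 < Z q.1} :=
    measurableSet_lt measurable_snd (hZ.comp measurable_fst)
  have hgeq : g = ({q : Ω × ℝ | q.2 < Z q.1}).indicator (fun _ => (1:ℝ)) := by
    funext q
    by_cases h : q.2 < Z q.1 <;> simp [hg, h, Set.indicator_apply]
  have hgint : Integrable g (P.prod ν) := by
    rw [hgeq]; exact (integrable_const 1).indicator hSmeas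
  have h1 : ∫ q, g q ∂(P.prod ν) = ∫ ω, Z ω ∂P := by
    rw [integral_prod g hgint]
    refine integral_congr_ae ?_
    filter_upwards [hc] with ω hω
    exact slice_integral c (Z ω) hω.1 hω.2
  have h2 : ∫ q, g q ∂(P.prod ν) = ∫ s, (P {ω | s < Z ω}).toReal ∂ν := by
    rw [integral_prod_symm g hgint]
    refine integral_congr_ae (Filter.Eventually.of_forall fun s => ?_)
    show ∫ ω, g (ω, s) ∂P = (P {ω | s < Z ω}).toReal
    have : (fun ω => g (ω, s)) = ({ω | s < Z ω}).indicator (1 : Ω → ℝ) := by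
      funext ω
      by_cases h : s < Z ω <;> simp [hg, h, Set.indicator_apply]
    rw [this]
    exact integral_indicator_one (hZ measurableSet_Ioi)
  rw [← h1, h2]

theorem covariance_dependence_bound
    {Ω : Type*} [MeasurableSpace Ω]
    (P : Measure Ω) [IsProbabilityMeasure P]
    (X Y : Ω → ℝ) (hX : Measurable X) (hY : Measurable Y)
    (a b : ℝ) (ha : 0 < a) (hb : 0 < b)
    (hXab : ∀ᵐ ω ∂P, X ω ∈ Icc 0 a) (hYab : ∀ᵐ ω ∂P, Y ω ∈ Icc 0 b) :
    |(∫ ω, X ω * Y ω ∂P) - (∫ ω, X ω ∂P) * (∫ ω, Y ω ∂P)| ≤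
      a * b * sSup {r : ℝ | ∃ A B : Set ℝ, MeasurableSet A ∧ MeasurableSet B ∧
        r = |(P (X ⁻¹' A ∩ Y ⁻¹' B)).toReal -
          (P (X ⁻¹' A)).toReal * (P (Y ⁻¹' B)).toReal|} := by
  haveI : Fact ((volume : Measure ℝ) (Ioc 0 a) < ⊤) := ⟨measure_Ioc_lt_top⟩
  haveI : Fact ((volume : Measure ℝ) (Ioc 0 b) < ⊤) := ⟨measure_Ioc_lt_top⟩
  set S := {r : ℝ | ∃ A B : Set ℝ, MeasurableSet A ∧ MeasurableSet B ∧
      r = |(P (X ⁻¹' A ∩ Y ⁻¹' B)).toReal -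
        (P (X ⁻¹' A)).toReal * (P (Y ⁻¹' B)).toReal|} with hS
  have hSbdd : BddAbove S := by
    refine ⟨1, ?_⟩
    rintro r ⟨A, B, hA, hB, rfl⟩
    have h1 := (P (X ⁻¹' A ∩ Y ⁻¹' B)).toReal_nonneg
    have h2 := prob_toReal_le_one P (X ⁻¹' A ∩ Y ⁻¹' B)
    have h3 := (P (X ⁻¹' A)).toReal_nonneg
    have h4 := prob_toReal_le_one P (X ⁻¹' A)
    have h5 := (P (Y ⁻¹' B)).toReal_nonneg
    have h6 := prob_toReal_le_one P (Y ⁻¹' B)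
    rw [abs_le]
    constructor <;> nlinarith
  set M := sSup S with hM
  set ν := (volume : Measure ℝ).restrict (Ioc 0 a) with hν
  set κ := (volume : Measure ℝ).restrict (Ioc 0 b) with hκ
  -- the key pointwise bound
  have key : ∀ s t : ℝ, |(P ({ω | s < X ω} ∩ {ω | t < Y ω})).toReal -
      (P {ω | s < X ω}).toReal * (P {ω | t < Y ω}).toReal| ≤ M := by
    intro s t
    refine le_csSup hSbdd ⟨Ioi s, Ioi t, measurableSet_Ioi, measurableSet_Ioi, rfl⟩
  -- Fubini for E(XY)
  set g : Ω × (ℝ × ℝ) → ℝ := fun q =>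
    (if q.2.1 < X q.1 then (1:ℝ) else 0) * (if q.2.2 < Y q.1 then (1:ℝ) else 0) with hg
  have hSmeas : MeasurableSet {q : Ω × ℝ × ℝ | q.2.1 < X q.1 ∧ q.2.2 < Y q.1} :=
    (measurableSet_lt (measurable_fst.comp measurable_snd) (hX.comp measurable_fst)).inter
      (measurableSet_lt (measurable_snd.comp measurable_snd) (hY.comp measurable_fst))
  have hgeq : g = ({q : Ω × ℝ × ℝ | q.2.1 < X q.1 ∧ q.2.2 < Y q.1}).indicator
      (fun _ => (1:ℝ)) := by
    funext q
    by_cases h1 : q.2.1 < X q.1 <;> by_cases h2 : q.2.2 < Y q.1 <;>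
      simp [hg, h1, h2, Set.indicator_apply]
  have hgint : Integrable g (P.prod (ν.prod κ)) := by
    rw [hgeq]; exact (integrable_const 1).indicator hSmeas
  set F : ℝ × ℝ → ℝ := fun p => (P ({ω | p.1 < X ω} ∩ {ω | p.2 < Y ω})).toReal with hF
  have hFrep : ∀ p : ℝ × ℝ, (∫ ω, g (ω, p) ∂P) = F p := by
    intro p
    have : (fun ω => g (ω, p)) =
        ({ω | p.1 < X ω} ∩ {ω | p.2 < Y ω}).indicator (1 : Ω → ℝ) := by
      funext ω
      by_cases h1 : p.1 < X ω <;> by_cases h2 : p.2 < Y ω <;>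
        simp [hg, h1, h2, Set.indicator_apply]
    rw [this]
    exact integral_indicator_one ((hX measurableSet_Ioi).inter (hY measurableSet_Ioi))
  have hA1 : ∫ q, g q ∂(P.prod (ν.prod κ)) = ∫ ω, X ω * Y ω ∂P := by
    rw [integral_prod g hgint]
    refine integral_congr_ae ?_
    filter_upwards [hXab, hYab] with ω h1 h2
    calc ∫ p, g (ω, p) ∂(ν.prod κ)
        = (∫ s, (if s < X ω then (1:ℝ) else 0) ∂ν) *
          ∫ t, (if t < Y ω then (1:ℝ) else 0) ∂κ :=
          integral_prod_mul (fun s => if s < X ω then (1:ℝ) else 0)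
            (fun t => if t < Y ω then (1:ℝ) else 0)
      _ = X ω * Y ω := by
          rw [slice_integral a (X ω) h1.1 h1.2, slice_integral b (Y ω) h2.1 h2.2]
  have hA2 : ∫ q, g q ∂(P.prod (ν.prod κ)) = ∫ p, F p ∂(ν.prod κ) := by
    rw [integral_prod_symm g hgint]
    exact integral_congr_ae (Filter.Eventually.of_forall fun p => hFrep p)
  have hFint : Integrable F (ν.prod κ) := by
    have := hgint.integral_prod_right
    refine this.congr (Filter.Eventually.of_forall fun p => hFrep p)
  -- one-variable pieces
  set G1 : ℝ → ℝ := fun s => (P {ω | s < X ω}).toReal with hG1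
  set G2 : ℝ → ℝ := fun t => (P {ω | t < Y ω}).toReal with hG2
  have hG1int : Integrable G1 ν := by
    have hanti : Antitone G1 := by
      intro s s' hss'
      exact ENNReal.toReal_mono (measure_ne_top P _)
        (measure_mono (fun ω (h : s' < X ω) => lt_of_le_of_lt hss' h))
    refine Integrable.mono' (integrable_const 1) hanti.measurable.aestronglyMeasurable
      (Filter.Eventually.of_forall fun s => ?_)
    rw [Real.norm_eq_abs, abs_of_nonneg ENNReal.toReal_nonneg]
    exact prob_toReal_le_one P _
  have hG2int : Integrable G2 κ := by
    have hanti : Antitone G2 := by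
      intro t t' htt'
      exact ENNReal.toReal_mono (measure_ne_top P _)
        (measure_mono (fun ω (h : t' < Y ω) => lt_of_le_of_lt htt' h))
    refine Integrable.mono' (integrable_const 1) hanti.measurable.aestronglyMeasurable
      (Filter.Eventually.of_forall fun t => ?_)
    rw [Real.norm_eq_abs, abs_of_nonneg ENNReal.toReal_nonneg]
    exact prob_toReal_le_one P _
  have hGint : Integrable (fun p : ℝ × ℝ => G1 p.1 * G2 p.2) (ν.prod κ) :=
    hG1int.mul_prod hG2int
  have hB : (∫ ω, X ω ∂P) * (∫ ω, Y ω ∂P) = ∫ p : ℝ × ℝ, G1 p.1 * G2 p.2 ∂(ν.prod κ) := by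
    rw [integral_prod_mul G1 G2, ← layer_cake P X hX a hXab, ← layer_cake P Y hY b hYab]
  -- combine
  have hmain : (∫ ω, X ω * Y ω ∂P) - (∫ ω, X ω ∂P) * (∫ ω, Y ω ∂P) =
      ∫ p : ℝ × ℝ, (F p - G1 p.1 * G2 p.2) ∂(ν.prod κ) := by
    rw [← hA1, hA2, hB, integral_sub hFint hGint]
  rw [hmain]
  have hbound : ‖∫ p : ℝ × ℝ, (F p - G1 p.1 * G2 p.2) ∂(ν.prod κ)‖ ≤
      M * ((ν.prod κ) univ).toReal := by
    refine norm_integral_le_of_norm_le_const (Filter.Eventually.of_forall fun p => ?_)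
    rw [Real.norm_eq_abs]
    exact key p.1 p.2
  have huniv : ((ν.prod κ) univ).toReal = a * b := by
    rw [← univ_prod_univ, Measure.prod_prod, hν, hκ,
      Measure.restrict_apply_univ, Measure.restrict_apply_univ,
      Real.volume_Ioc, Real.volume_Ioc, ← ENNReal.ofReal_mul (by linarith)]
    rw [ENNReal.toReal_ofReal (by nlinarith)]
    ring
  rw [Real.norm_eq_abs] at hbound
  rw [huniv] at hbound
  calc |∫ p : ℝ × ℝ, (F p - G1 p.1 * G2 p.2) ∂(ν.prod κ)| ≤ M * (a * b) := hbound
    _ = a * b * M := by ring
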